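/- In the 3-SAT encoding graph G(φ) (as in the Bounded Max Length reduction), every solution feasible under budget β = |X| and reachability must select as casting voters exactly one literal voter from each pair {v_x, v_{¬x}}, and no clause or dummy voter can be a casting voter. -/
import Mathlib


/-- Voters of the encoding of a 3-CNF formula with variables `X` and `n`
clauses: literal voters `lit x b`, clause voters `clause j`, and the two
clause-dummy voters `dum j false` (= d_{C_j}) and `dum j true` (= d'_{C_j}). -/
inductive Vtx (X : Type) (n : ℕ) where
  | lit : X → Bool → Vtx X n
  | clause : Fin n → Vtx X n
  | dum : Fin n → Bool → Vtx X n
deriving DecidableEq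

/-- A 3-CNF formula over `X` with `n` clauses. -/
abbrev Cnf (X : Type) (n : ℕ) := Fin n → (X × Bool) × ((X × Bool) × (X × Bool))

/-- Edges of the encoding graph. -/
inductive Edge {X : Type} {n : ℕ} (φ : Cnf X n) : Vtx X n → Vtx X n → Prop
  | cd (j : Fin n) (b : Bool) : Edge φ (.clause j) (.dum j b)
  | d1 (j : Fin n) : Edge φ (.dum j false) (.lit (φ j).1.1 (φ j).1.2)
  | d2 (j : Fin n) : Edge φ (.dum j true) (.lit (φ j).2.1.1 (φ j).2.1.2)
  | d3 (j : Fin n) : Edge φ (.dum j true) (.lit (φ j).2.2.1 (φ j).2.2.2)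
  | flip (x : X) (b : Bool) : Edge φ (.lit x b) (.lit x (!b))

/-- In the 3-SAT encoding graph, every solution feasible under the budget
`β = |X|` (all voting costs 1, delegating costs 0, so the cost is `|C|`) and
the reachability constraint selects as casting voters exactly one literal voter
from each complementary pair, and no clause voter or dummy voter is a casting
voter. -/
theorem feasible_budget_selects_literals {X : Type} [Fintype X] [DecidableEq X]
    {n : ℕ} (φ : Cnf X n) (C : Finset (Vtx X n)) (Dn : Vtx X n → Option (Vtx X n))
    (hnone : ∀ i, Dn i = none ↔ i ∈ C)
    (hedge : ∀ i j, Dn i = some j → Edge φ i j)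
    (hreach : ∀ i, i ∉ C → ∃ j ∈ C,
      Relation.ReflTransGen (fun a b => Dn a = some b) i j)
    (hbudget : C.card ≤ Fintype.card X) :
    (∀ x : X, (Vtx.lit x true ∈ C ↔ Vtx.lit x false ∉ C)) ∧
    (∀ j : Fin n, Vtx.clause j ∉ C) ∧
    (∀ (j : Fin n) (b : Bool), Vtx.dum j b ∉ C) := by
  -- Step 1: for every x, at least one of the two literal voters is in C.
  have key : ∀ x : X, Vtx.lit x true ∈ C ∨ Vtx.lit x false ∈ C := by
    intro x
    by_contra h
    push_neg at h
    obtain ⟨ht, hf⟩ := h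
    obtain ⟨j, hjC, hpath⟩ := hreach (Vtx.lit x true) ht
    have hS : ∀ b, Relation.ReflTransGen (fun a b => Dn a = some b) (Vtx.lit x true) b →
        b = Vtx.lit x true ∨ b = Vtx.lit x false := by
      intro b hb
      induction hb with
      | refl => exact Or.inl rfl
      | tail _ hstep ih =>
        rename_i u v _
        have he := hedge _ _ hstep
        rcases ih with h1 | h1 <;> subst h1 <;> cases he <;> simp
    rcases hS j hpath with h1 | h1 <;> rw [h1] at hjC
    · exact ht hjC
    · exact hf hjC
  -- Step 2: build an injection X → C.
  classical
  set f : X → Vtx X n := fun x =>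
    if Vtx.lit x true ∈ C then Vtx.lit x true else Vtx.lit x false with hf
  have hfC : ∀ x, f x ∈ C := by
    intro x
    simp only [hf]
    split
    · assumption
    · rcases key x with h | h
      · contradiction
      · exact h
  have hfinj : Function.Injective f := by
    intro a b hab
    simp only [hf] at hab
    split at hab <;> split at hab <;> simp_all
  have himg : Finset.univ.image f ⊆ C := by
    intro a ha
    simp only [Finset.mem_image] at ha
    obtain ⟨x, _, rfl⟩ := ha
    exact hfC x
  have hcard : (Finset.univ.image f).card = Fintype.card X := by
    rw [Finset.card_image_of_injective _ hfinj, Finset.card_univ]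
  have hCeq : C = Finset.univ.image f := by
    apply (Finset.eq_of_subset_of_card_le himg (by omega)).symm
  have hmemC : ∀ a ∈ C, ∃ x, f x = a := by
    intro a ha
    rw [hCeq] at ha
    simpa using Finset.mem_image.mp ha
  refine ⟨?_, ?_, ?_⟩
  · intro x
    constructor
    · intro ht hfalse
      obtain ⟨y, hy⟩ := hmemC _ hfalse
      simp only [hf] at hy
      split at hy
      · simp at hy
      · rename_i hnot
        have : y = x := by
          injection hy
        subst this
        exact hnot ht
    · intro hfalse
      rcases key x with h | h
      · exact h
      · exact absurd h hfalse
  · intro j hj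
    obtain ⟨y, hy⟩ := hmemC _ hj
    simp only [hf] at hy
    split at hy <;> simp at hy
  · intro j b hj
    obtain ⟨y, hy⟩ := hmemC _ hj
    simp only [hf] at hy
    split at hy <;> simp at hy
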